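/- Fix real numbers α and n, and for each real m define f_m : ℝ → ℂ by f_m(ω) = e^{-2im·arctan(ω)}·(1+ω²)^{-(α+1)/2}. Then f_n is differentiable on ℝ and for every ω, f_n'(ω) = -(i(α+1)/4)·(f_{n+1}(ω) - f_{n-1}(ω)) - (in/2)·(f_{n+1}(ω) + f_{n-1}(ω) + 2 f_n(ω)). -/

import Mathlib

open Complex Real

/-- The recursion in the Fourier domain: with
`f_m(ω) = e^{-2im arctan ω} (1+ω²)^{-(α+1)/2}`, the function `f_n` is differentiable and
`f_n' = -(i(α+1)/4)(f_{n+1} - f_{n-1}) - (in/2)(f_{n+1} + f_{n-1} + 2 f_n)`. -/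
theorem fourier_recursion (α n : ℝ) (f : ℝ → ℝ → ℂ)
    (hf : ∀ m ω, f m ω =
      Complex.exp (-2 * Complex.I * (m : ℂ) * (Real.arctan ω : ℂ)) *
        (((1 + ω ^ 2) ^ (-(α + 1) / 2) : ℝ) : ℂ)) :
    Differentiable ℝ (f n) ∧
      ∀ ω : ℝ, deriv (f n) ω =
        -(Complex.I * (α + 1) / 4) * (f (n + 1) ω - f (n - 1) ω) -
          (Complex.I * (n : ℂ) / 2) * (f (n + 1) ω + f (n - 1) ω + 2 * f n ω) := by
  set p : ℝ := -(α + 1) / 2 with hp_def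
  have hfun : f n = fun ω : ℝ =>
      Complex.exp (-2 * Complex.I * (n : ℂ) * (Real.arctan ω : ℂ)) *
        (((1 + ω ^ 2) ^ p : ℝ) : ℂ) := funext (hf n)
  have key : ∀ ω : ℝ, HasDerivAt (f n)
      (Complex.exp (-2 * Complex.I * (n : ℂ) * (Real.arctan ω : ℂ)) *
          (-2 * Complex.I * (n : ℂ) * ((1 / (1 + ω ^ 2) : ℝ) : ℂ)) *
          (((1 + ω ^ 2) ^ p : ℝ) : ℂ)
        + Complex.exp (-2 * Complex.I * (n : ℂ) * (Real.arctan ω : ℂ)) *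
          ((2 * ω * p * (1 + ω ^ 2) ^ (p - 1) : ℝ) : ℂ)) ω := by
    intro ω
    have h1 : (0 : ℝ) < 1 + ω ^ 2 := by positivity
    have ha : HasDerivAt (fun ω : ℝ => ((Real.arctan ω : ℝ) : ℂ))
        (((1 / (1 + ω ^ 2) : ℝ) : ℂ)) ω := (Real.hasDerivAt_arctan ω).ofReal_comp
    have he : HasDerivAt
        (fun ω : ℝ => Complex.exp (-2 * Complex.I * (n : ℂ) * (Real.arctan ω : ℂ)))
        (Complex.exp (-2 * Complex.I * (n : ℂ) * (Real.arctan ω : ℂ)) *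
          (-2 * Complex.I * (n : ℂ) * ((1 / (1 + ω ^ 2) : ℝ) : ℂ))) ω := by
      have := (ha.const_mul (-2 * Complex.I * (n : ℂ))).cexp
      simpa [mul_assoc] using this
    have hp0 : HasDerivAt (fun ω : ℝ => 1 + ω ^ 2) (2 * ω) ω := by
      simpa using ((hasDerivAt_pow 2 ω).const_add 1)
    have hpow : HasDerivAt (fun ω : ℝ => ((1 + ω ^ 2) ^ p : ℝ))
        (2 * ω * p * (1 + ω ^ 2) ^ (p - 1)) ω :=
      hp0.rpow_const (Or.inl h1.ne')
    have hmul := he.mul hpow.ofReal_comp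
    rw [hfun]
    convert hmul using 1
    all_goals rfl
  constructor
  · intro ω; exact (key ω).differentiableAt
  · intro ω
    have h1 : (0 : ℝ) < 1 + ω ^ 2 := by positivity
    have h1C : ((1 : ℂ) + (ω : ℂ) ^ 2) ≠ 0 := by
      have : ((1 + ω ^ 2 : ℝ) : ℂ) ≠ 0 := by exact_mod_cast h1.ne'
      push_cast at this; exact this
    set a : ℝ := Real.arctan ω with ha_def
    have hs : Real.sqrt (1 + ω ^ 2) ^ 2 = 1 + ω ^ 2 := Real.sq_sqrt h1.le
    have hs0 : Real.sqrt (1 + ω ^ 2) ≠ 0 := by positivity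
    -- real trig identities
    have hcos2 : Real.cos (2 * a) = (1 - ω ^ 2) / (1 + ω ^ 2) := by
      rw [Real.cos_two_mul, Real.cos_arctan]
      field_simp
      nlinarith [hs]
    have hsin2 : Real.sin (2 * a) = 2 * ω / (1 + ω ^ 2) := by
      rw [Real.sin_two_mul, Real.sin_arctan, Real.cos_arctan]
      field_simp
      rw [hs]
    -- exp identities
    have hEm : Complex.exp (-2 * Complex.I * (a : ℂ)) =
        (1 - (ω : ℂ) * Complex.I) ^ 2 / (1 + (ω : ℂ) ^ 2) := by
      have harg : (-2 * Complex.I * (a : ℂ)) = ((-(2 * a) : ℝ) : ℂ) * Complex.I := by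
        push_cast; ring
      rw [harg, Complex.exp_mul_I, ← Complex.ofReal_cos, ← Complex.ofReal_sin,
        Real.cos_neg, Real.sin_neg, hcos2, hsin2]
      have hI2 : Complex.I ^ 2 = -1 := Complex.I_sq
      push_cast
      field_simp
      linear_combination (-(ω:ℂ)^2) * hI2
    have hEp : Complex.exp (2 * Complex.I * (a : ℂ)) =
        (1 + (ω : ℂ) * Complex.I) ^ 2 / (1 + (ω : ℂ) ^ 2) := by
      have harg : (2 * Complex.I * (a : ℂ)) = (((2 * a) : ℝ) : ℂ) * Complex.I := by
        push_cast; ring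
      rw [harg, Complex.exp_mul_I, ← Complex.ofReal_cos, ← Complex.ofReal_sin,
        hcos2, hsin2]
      have hI2 : Complex.I ^ 2 = -1 := Complex.I_sq
      push_cast
      field_simp
      linear_combination (-(ω:ℂ)^2) * hI2
    have hsplit₁ : Complex.exp (-2 * Complex.I * ((n + 1 : ℝ) : ℂ) * (a : ℂ)) =
        Complex.exp (-2 * Complex.I * (n : ℂ) * (a : ℂ)) *
          Complex.exp (-2 * Complex.I * (a : ℂ)) := by
      rw [← Complex.exp_add]; congr 1; push_cast; ring
    have hsplit₂ : Complex.exp (-2 * Complex.I * ((n - 1 : ℝ) : ℂ) * (a : ℂ)) =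
        Complex.exp (-2 * Complex.I * (n : ℂ) * (a : ℂ)) *
          Complex.exp (2 * Complex.I * (a : ℂ)) := by
      rw [← Complex.exp_add]; congr 1; push_cast; ring
    have hrp : ((1 + ω ^ 2 : ℝ) ^ (p - 1) : ℝ) = (1 + ω ^ 2) ^ p / (1 + ω ^ 2) := by
      rw [Real.rpow_sub h1, Real.rpow_one]
    rw [(key ω).deriv, hf (n + 1) ω, hf (n - 1) ω, hf n ω, ← ha_def,
      hsplit₁, hsplit₂, hEm, hEp, hrp]
    have hpC : ((p : ℝ) : ℂ) = -((α : ℂ) + 1) / 2 := by rw [hp_def]; push_cast; ring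
    push_cast [hpC]
    have hI2 : Complex.I ^ 2 = -1 := Complex.I_sq
    have hI3 : Complex.I ^ 3 = -Complex.I := by
      rw [pow_succ, hI2]; ring
    field_simp
    ring_nf
    simp only [hI2, hI3]
    ring
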